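/- Let (K, ⟨−,−⟩, s) be an integral Serre lattice of surface type equipped with a codimension filtration (F¹, F²), and let f ∈ F¹K with ⟨f, f⟩ = 1. Set z := (s − 1)f and K̄ := {y ∈ K : ⟨y, f⟩ = 0}. Then: K = ℤ·f ⊕ K̄; the restriction of ⟨−,−⟩ to K̄ is nondegenerate; z ∈ F²K and z ∈ K̄; the map s̄(y) := s(y) + ⟨y, z⟩·f sends K̄ into K̄ and (K̄, ⟨−,−⟩|_{K̄}, s̄) is an integral Serre lattice of surface type with codimension filtration F¹K̄ := F¹(K̄⊗ℚ) ∩ F¹V, F²K̄ := F²V (intersected with K̄ ⊗ ℚ); and the numerical blowup of K̄ at z is isomorphic to K via the map sending f to f and K̄ into K identically (this map matches the bilinear forms and intertwines the blowup automorphism with s). -/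

import Mathlib

open TensorProduct

variable {K : Type*} [AddCommGroup K]

instance : Module.Flat ℤ ℚ := IsLocalization.flat ℚ (nonZeroDivisors ℤ)

lemma tmul_int_eq_zero [Module.Free ℤ K] {x : K}
    (h : (1:ℚ) ⊗ₜ[ℤ] x = 0) : x = 0 := by
  classical
  let b := Module.Free.chooseBasis ℤ K
  have hrepr : ∀ i, b.repr x i = 0 := by
    intro i
    have := congrArg (fun v => (b.baseChange ℚ).repr v i) h
    simp only [map_zero, Finsupp.coe_zero, Pi.zero_apply] at this
    rw [Module.Basis.baseChange_repr_tmul] at this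
    have : ((b.repr x i : ℤ) : ℚ) = 0 := by simpa using this
    exact_mod_cast this
  have : b.repr x = 0 := Finsupp.ext hrepr
  simpa using congrArg b.repr.symm this

lemma bq_tmul (B : K →ₗ[ℤ] K →ₗ[ℤ] ℤ) (x y : K) :
    LinearMap.BilinForm.baseChange ℚ B ((1:ℚ) ⊗ₜ[ℤ] x) ((1:ℚ) ⊗ₜ[ℤ] y) = (B x y : ℚ) := by
  simp [LinearMap.BilinForm.baseChange_tmul, zsmul_eq_mul]

lemma serreQ (B : K →ₗ[ℤ] K →ₗ[ℤ] ℤ) (s : K →ₗ[ℤ] K)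
    (hserre : ∀ v w, B v (s w) = B w v) (v w : ℚ ⊗[ℤ] K) :
    LinearMap.BilinForm.baseChange ℚ B v (LinearMap.baseChange ℚ s w)
      = LinearMap.BilinForm.baseChange ℚ B w v := by
  induction v using TensorProduct.induction_on with
  | zero => simp
  | add v1 v2 h1 h2 => simp [h1, h2]
  | tmul a x =>
    induction w using TensorProduct.induction_on with
    | zero => simp
    | add w1 w2 h1 h2 => simp [map_add, h1, h2]
    | tmul c y =>
      simp only [LinearMap.baseChange_tmul, LinearMap.BilinForm.baseChange_tmul, hserre]
      rw [mul_comm]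

lemma range_iotaQ (B : K →ₗ[ℤ] K →ₗ[ℤ] ℤ) (f : K) (hff : B f f = 1) :
    LinearMap.range (LinearMap.baseChange ℚ (LinearMap.ker (B.flip f)).subtype)
      = LinearMap.ker ((LinearMap.BilinForm.baseChange ℚ B).flip ((1:ℚ) ⊗ₜ[ℤ] f)) := by
  set Kb := LinearMap.ker (B.flip f)
  apply le_antisymm
  · rintro v ⟨u, rfl⟩
    simp only [LinearMap.mem_ker, LinearMap.flip_apply]
    induction u using TensorProduct.induction_on with
    | zero => simp
    | add v1 v2 h1 h2 => simp [map_add, h1, h2]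
    | tmul a y =>
      have hy : B (y : K) f = 0 := y.2
      simp [LinearMap.BilinForm.baseChange_tmul, hy]
  · intro v hv
    simp only [LinearMap.mem_ker, LinearMap.flip_apply] at hv
    have key : ∀ w : ℚ ⊗[ℤ] K,
        w - (LinearMap.BilinForm.baseChange ℚ B w ((1:ℚ) ⊗ₜ[ℤ] f)) • ((1:ℚ) ⊗ₜ[ℤ] f)
          ∈ LinearMap.range (LinearMap.baseChange ℚ Kb.subtype) := by
      intro w
      induction w using TensorProduct.induction_on with
      | zero => simp
      | add w1 w2 h1 h2 =>
        have : (w1 + w2) - (LinearMap.BilinForm.baseChange ℚ B (w1 + w2) ((1:ℚ) ⊗ₜ[ℤ] f)) • ((1:ℚ) ⊗ₜ[ℤ] f)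
            = (w1 - (LinearMap.BilinForm.baseChange ℚ B w1 ((1:ℚ) ⊗ₜ[ℤ] f)) • ((1:ℚ) ⊗ₜ[ℤ] f))
              + (w2 - (LinearMap.BilinForm.baseChange ℚ B w2 ((1:ℚ) ⊗ₜ[ℤ] f)) • ((1:ℚ) ⊗ₜ[ℤ] f)) := by
          simp only [map_add, LinearMap.add_apply]
          module
        rw [this]
        exact Submodule.add_mem _ h1 h2
      | tmul a x =>
        have hmem : x - B x f • f ∈ Kb := by
          simp [Kb, LinearMap.mem_ker, hff]
        refine ⟨a ⊗ₜ[ℤ] (⟨x - B x f • f, hmem⟩ : Kb), ?_⟩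
        simp only [LinearMap.baseChange_tmul, Submodule.coe_subtype,
          LinearMap.BilinForm.baseChange_tmul]
        rw [tmul_sub, tmul_smul]
        congr 1
        rw [mul_one, zsmul_eq_mul, mul_comm, mul_smul, Int.cast_smul_eq_zsmul,
          smul_comm, smul_tmul', smul_tmul', smul_eq_mul, mul_one]
        exact smul_tmul' _ _ _
    have h2 := key v
    have hv2 : (LinearMap.BilinForm.baseChange ℚ B v) ((1:ℚ) ⊗ₜ[ℤ] f) = 0 := hv
    rwa [hv2, zero_smul, sub_zero] at h2

lemma domRestrict_baseChange (B : K →ₗ[ℤ] K →ₗ[ℤ] ℤ) (N : Submodule ℤ K)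
    (v w : ℚ ⊗[ℤ] ↥N) :
    LinearMap.BilinForm.baseChange ℚ (B.domRestrict₁₂ N N) v w
      = LinearMap.BilinForm.baseChange ℚ B
          (LinearMap.baseChange ℚ N.subtype v) (LinearMap.baseChange ℚ N.subtype w) := by
  induction v using TensorProduct.induction_on with
  | zero => simp
  | add v1 v2 h1 h2 => simp [map_add, h1, h2]
  | tmul a x =>
    induction w using TensorProduct.induction_on with
    | zero => simp
    | add w1 w2 h1 h2 => simp [map_add, h1, h2]
    | tmul c y =>
      simp [LinearMap.BilinForm.baseChange_tmul, LinearMap.baseChange_tmul,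
        LinearMap.domRestrict₁₂_apply]

lemma baseChange_T_apply (B : K →ₗ[ℤ] K →ₗ[ℤ] ℤ) (s : K →ₗ[ℤ] K) (f z : K)
    (v : ℚ ⊗[ℤ] K) :
    LinearMap.baseChange ℚ (s + LinearMap.toSpanSingleton ℤ K f ∘ₗ B.flip z) v
      = LinearMap.baseChange ℚ s v
        + (LinearMap.BilinForm.baseChange ℚ B v ((1:ℚ) ⊗ₜ[ℤ] z)) • ((1:ℚ) ⊗ₜ[ℤ] f) := by
  induction v using TensorProduct.induction_on with
  | zero => simp
  | add v1 v2 h1 h2 => simp only [map_add, h1, h2, LinearMap.add_apply]; module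
  | tmul a x =>
    simp only [LinearMap.baseChange_tmul, LinearMap.add_apply, LinearMap.comp_apply,
      LinearMap.flip_apply, LinearMap.toSpanSingleton_apply,
      LinearMap.BilinForm.baseChange_tmul]
    rw [tmul_add, tmul_smul]
    congr 1
    rw [mul_one, zsmul_eq_mul, mul_comm, mul_smul, Int.cast_smul_eq_zsmul,
      smul_comm, smul_tmul', smul_tmul', smul_eq_mul, mul_one]
    exact smul_tmul' _ _ _

lemma iotaQ_injective (N : Submodule ℤ K) :
    Function.Injective (LinearMap.baseChange ℚ N.subtype) := by
  rw [LinearMap.baseChange_eq_ltensor]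
  exact Module.Flat.lTensor_preserves_injective_linearMap N.subtype N.injective_subtype





/-- The blowup bilinear form on `K̃ = ℤ·f ⊕ K` (realized as `ℤ × K`, with `f = (1,0)`):
`⟨f,f⟩ = 1`, `⟨x,f⟩ = 0`, `⟨f,y⟩ = ⟨z,y⟩` for `x, y ∈ K`. -/
def blowupForm (B : K →ₗ[ℤ] K →ₗ[ℤ] ℤ) (z : K) :
    (ℤ × K) →ₗ[ℤ] (ℤ × K) →ₗ[ℤ] ℤ :=
  LinearMap.mk₂ ℤ (fun p q => p.1 * q.1 + p.1 * B z q.2 + B p.2 q.2)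
    (by intro p p' q; simp [add_mul]; ring)
    (by intro c p q; simp [smul_eq_mul]; ring)
    (by intro p q q'; simp [mul_add]; ring)
    (by intro c p q; simp [smul_eq_mul]; ring)

/-- The blowup Serre automorphism on `ℤ × K`: `s̃(f) = f + z`, `s̃(y) = s(y) − ⟨y,z⟩·f`. -/
def blowupAut (B : K →ₗ[ℤ] K →ₗ[ℤ] ℤ) (s : K →ₗ[ℤ] K) (z : K) :
    (ℤ × K) →ₗ[ℤ] (ℤ × K) where
  toFun p := (p.1 - B p.2 z, p.1 • z + s p.2)
  map_add' p q := by
    ext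
    · simp; ring
    · simp only [Prod.fst_add, Prod.snd_add, map_add, LinearMap.add_apply, add_smul,
        Prod.mk_add_mk]
      abel
  map_smul' c p := by
    ext
    · simp [smul_eq_mul]; ring
    · simp only [Prod.smul_fst, Prod.smul_snd, smul_eq_mul, map_smul, smul_add, mul_smul,
        RingHom.id_apply]

/-- An integral Serre lattice is of surface type if the base-changed automorphism
`s_ℚ` on `V := ℚ ⊗ K` is unipotent and `rank(s_ℚ − 1) ≤ 2`. -/
def IsSurfaceType {K : Type*} [AddCommGroup K] (s : K →ₗ[ℤ] K) : Prop :=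
  (LinearMap.baseChange ℚ s - 1) ^ (Module.finrank ℚ (ℚ ⊗[ℤ] K)) = 0 ∧
    Module.finrank ℚ (LinearMap.range (LinearMap.baseChange ℚ s - 1)) ≤ 2

/-- A codimension filtration on an integral Serre lattice of surface type: ℚ-subspaces
`F² ⊆ F¹` of `V = ℚ ⊗ K` with `(s−1)V ⊆ F¹`, `(s−1)F¹ ⊆ F²`, `(s−1)F² = 0`,
`dim F¹ = n − 1`, `dim F² = 1` and `⟨F¹, F²⟩ = 0`. -/
def IsCodimFiltration {K : Type*} [AddCommGroup K] (B : K →ₗ[ℤ] K →ₗ[ℤ] ℤ)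
    (s : K →ₗ[ℤ] K) (F1 F2 : Submodule ℚ (ℚ ⊗[ℤ] K)) : Prop :=
  F2 ≤ F1 ∧
    LinearMap.range (LinearMap.baseChange ℚ s - 1) ≤ F1 ∧
    Submodule.map (LinearMap.baseChange ℚ s - 1) F1 ≤ F2 ∧
    Submodule.map (LinearMap.baseChange ℚ s - 1) F2 = ⊥ ∧
    Module.finrank ℚ F1 = Module.finrank ℚ (ℚ ⊗[ℤ] K) - 1 ∧
    Module.finrank ℚ F2 = 1 ∧
    ∀ v ∈ F1, ∀ w ∈ F2, LinearMap.BilinForm.baseChange ℚ B v w = 0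

set_option maxHeartbeats 1000000

/-- numerical blowdown: let `(K, ⟨−,−⟩, s)` be an integral Serre lattice of
surface type with codimension filtration `(F¹, F²)` and `f ∈ F¹K` with `⟨f,f⟩ = 1`. With
`z := (s−1)f` and `K̄ := {y ∈ K : ⟨y,f⟩ = 0}`: `K = ℤ·f ⊕ K̄`; the restricted form is
nondegenerate; `z ∈ F²K ∩ K̄`; `s̄(y) := s(y) + ⟨y,z⟩·f` preserves `K̄` and makes `K̄` an
integral Serre lattice of surface type with the induced codimension filtration; and the
numerical blowup of `K̄` at `z` is isomorphic to `K` via `(m, y) ↦ m·f + y`. -/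

theorem blowdown (K : Type*) [AddCommGroup K]
    [Module.Free ℤ K] [Module.Finite ℤ K]
    (B : K →ₗ[ℤ] K →ₗ[ℤ] ℤ) (hB : ∀ v, (∀ w, B v w = 0) → v = 0)
    (s : K →ₗ[ℤ] K) (hbij : Function.Bijective s)
    (hserre : ∀ v w, B v (s w) = B w v)
    (hsurf : IsSurfaceType s)
    (F1 F2 : Submodule ℚ (ℚ ⊗[ℤ] K)) (hfil : IsCodimFiltration B s F1 F2)
    (f : K) (hf1 : (1 : ℚ) ⊗ₜ[ℤ] f ∈ F1) (hff : B f f = 1) :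
    IsCompl (Submodule.span ℤ {f}) (LinearMap.ker (B.flip f)) ∧
      (∀ x ∈ LinearMap.ker (B.flip f),
        (∀ y ∈ LinearMap.ker (B.flip f), B x y = 0) → x = 0) ∧
      (1 : ℚ) ⊗ₜ[ℤ] (s f - f) ∈ F2 ∧
      (∀ y ∈ LinearMap.ker (B.flip f),
        s y + B y (s f - f) • f ∈ LinearMap.ker (B.flip f)) ∧
      ∃ (hz : s f - f ∈ LinearMap.ker (B.flip f))
        (sbar : ↥(LinearMap.ker (B.flip f)) →ₗ[ℤ] ↥(LinearMap.ker (B.flip f))),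
        (∀ y : ↥(LinearMap.ker (B.flip f)),
          (sbar y : K) = s y + B y (s f - f) • f) ∧
        Function.Bijective sbar ∧
        (∀ x y : ↥(LinearMap.ker (B.flip f)),
          B.domRestrict₁₂ (LinearMap.ker (B.flip f)) (LinearMap.ker (B.flip f)) x (sbar y) =
            B.domRestrict₁₂ (LinearMap.ker (B.flip f)) (LinearMap.ker (B.flip f)) y x) ∧
        IsSurfaceType sbar ∧
        IsCodimFiltration
          (B.domRestrict₁₂ (LinearMap.ker (B.flip f)) (LinearMap.ker (B.flip f))) sbar
          (Submodule.comap (LinearMap.baseChange ℚ (LinearMap.ker (B.flip f)).subtype) F1)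
          (Submodule.comap (LinearMap.baseChange ℚ (LinearMap.ker (B.flip f)).subtype) F2) ∧
        (Function.Bijective
            (LinearMap.coprod (LinearMap.toSpanSingleton ℤ K f)
              (LinearMap.ker (B.flip f)).subtype) ∧
          (∀ p q : ℤ × ↥(LinearMap.ker (B.flip f)),
            B (LinearMap.coprod (LinearMap.toSpanSingleton ℤ K f)
                (LinearMap.ker (B.flip f)).subtype p)
              (LinearMap.coprod (LinearMap.toSpanSingleton ℤ K f)
                (LinearMap.ker (B.flip f)).subtype q) =
              blowupForm
                (B.domRestrict₁₂ (LinearMap.ker (B.flip f)) (LinearMap.ker (B.flip f)))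
                ⟨s f - f, hz⟩ p q) ∧
          ∀ p : ℤ × ↥(LinearMap.ker (B.flip f)),
            LinearMap.coprod (LinearMap.toSpanSingleton ℤ K f)
                (LinearMap.ker (B.flip f)).subtype
                (blowupAut
                  (B.domRestrict₁₂ (LinearMap.ker (B.flip f)) (LinearMap.ker (B.flip f)))
                  sbar ⟨s f - f, hz⟩ p) =
              s (LinearMap.coprod (LinearMap.toSpanSingleton ℤ K f)
                  (LinearMap.ker (B.flip f)).subtype p)) := by
  classical
  obtain ⟨h21, hrange, hmap1, hmap2, hd1, hd2, hpair⟩ := hfil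
  set Kb := LinearMap.ker (B.flip f) with hKbdef
  set z := s f - f with hzdef
  have hmemKb : ∀ y : K, y ∈ Kb ↔ B y f = 0 := by
    intro y; simp [hKbdef, LinearMap.mem_ker]
  set BQ := LinearMap.BilinForm.baseChange ℚ B with hBQdef
  set sQ := LinearMap.baseChange ℚ s with hsQdef
  set fQ : ℚ ⊗[ℤ] K := (1:ℚ) ⊗ₜ[ℤ] f with hfQdef
  set zQ : ℚ ⊗[ℤ] K := (1:ℚ) ⊗ₜ[ℤ] z with hzQdef
  have hsub1 : ∀ x : K, (sQ - 1) ((1:ℚ) ⊗ₜ[ℤ] x) = (1:ℚ) ⊗ₜ[ℤ] (s x - x) := by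
    intro x
    simp [hsQdef, LinearMap.sub_apply, tmul_sub]
  have hzF2 : zQ ∈ F2 := by
    have : (sQ - 1) fQ ∈ Submodule.map (sQ - 1) F1 := Submodule.mem_map_of_mem hf1
    rw [hsub1] at this
    exact hmap1 this
  have hzF1 : zQ ∈ F1 := h21 hzF2
  have hBfz : B f z = 0 := by
    have := hpair fQ hf1 zQ hzF2
    rw [hfQdef, hzQdef, bq_tmul] at this
    exact_mod_cast this
  have hBzz : B z z = 0 := by
    have := hpair zQ hzF1 zQ hzF2
    rw [hzQdef, bq_tmul] at this
    exact_mod_cast this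
  have hsf : s f = z + f := by rw [hzdef]; abel
  have hBzf : B z f = 0 := by
    have h1 : B z (s f) = B f z := hserre z f
    rw [hsf, map_add, hBzz, hBfz, zero_add] at h1
    exact h1
  have hz : z ∈ Kb := (hmemKb z).mpr hBzf
  have hszz : s z = z := by
    have h1 : (sQ - 1) zQ ∈ Submodule.map (sQ - 1) F2 := Submodule.mem_map_of_mem hzF2
    rw [hmap2, Submodule.mem_bot, hzQdef, hsub1] at h1
    have := tmul_int_eq_zero h1
    exact sub_eq_zero.mp this
  have hAz : ∀ x : K, B (s x) z = B x z := by
    intro x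
    have h1 : (sQ - 1) ((1:ℚ) ⊗ₜ[ℤ] x) ∈ F1 := hrange (LinearMap.mem_range_self _ _)
    have h2 := hpair _ h1 zQ hzF2
    rw [hsub1, hzQdef, bq_tmul] at h2
    have h3 : B (s x - x) z = 0 := by exact_mod_cast h2
    simp only [map_sub, LinearMap.sub_apply, sub_eq_zero] at h3
    exact h3
  have hsyf : ∀ y : K, y ∈ Kb → B (s y) f = - B y z := by
    intro y hy
    have h1 : B (s y) (s f) = B f (s y) := hserre (s y) f
    have h2 : B f (s y) = B y f := hserre f y
    rw [(hmemKb y).mp hy] at h2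
    rw [h2, hsf, map_add, hAz y] at h1
    linarith
  have hpres : ∀ y ∈ Kb, s y + B y z • f ∈ Kb := by
    intro y hy
    rw [hmemKb]
    rw [map_add, map_smul]
    simp only [LinearMap.add_apply, LinearMap.smul_apply, smul_eq_mul, hff, mul_one,
      hsyf y hy]
    ring
  have hproj : ∀ x : K, x - B x f • f ∈ Kb := by
    intro x
    rw [hmemKb, map_sub, map_smul]
    simp only [LinearMap.sub_apply, LinearMap.smul_apply, smul_eq_mul, hff, mul_one]
    ring
  refine ⟨?_, ?_, hzF2, hpres, ?_⟩
  · -- IsCompl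
    constructor
    · rw [Submodule.disjoint_def]
      intro x hx1 hx2
      obtain ⟨m, rfl⟩ := Submodule.mem_span_singleton.mp hx1
      have h1 : B (m • f) f = 0 := (hmemKb _).mp hx2
      rw [map_smul] at h1
      simp only [LinearMap.smul_apply, smul_eq_mul, hff, mul_one] at h1
      rw [h1, zero_smul]
    · rw [codisjoint_iff, eq_top_iff]
      intro x _
      have h1 : B x f • f ∈ Submodule.span ℤ {f} :=
        Submodule.smul_mem _ _ (Submodule.mem_span_singleton_self f)
      exact Submodule.mem_sup.mpr ⟨_, h1, _, hproj x, by abel⟩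
  · -- nondegeneracy
    intro x hx h
    apply hB
    intro w
    have h2 := h _ (hproj w)
    have h3 : B x f = 0 := (hmemKb x).mp hx
    have h4 : B x w = B x (w - B w f • f) + B w f * B x f := by
      rw [map_sub, map_smul]
      simp only [smul_eq_mul]
      ring
    rw [h2, h3] at h4
    linarith
  · -- the big existential
    refine ⟨hz, ?_⟩
    set T : K →ₗ[ℤ] K := s + LinearMap.toSpanSingleton ℤ K f ∘ₗ B.flip z with hTdef
    have hTapp : ∀ y : K, T y = s y + B y z • f := fun y => rfl
    set sbar : Kb →ₗ[ℤ] Kb :=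
      (T ∘ₗ Kb.subtype).codRestrict Kb (fun y => hpres y y.2) with hsbardef
    have hsbarapp : ∀ y : Kb, (sbar y : K) = s y + B y z • f := fun y => rfl
    set Phi := LinearMap.coprod (LinearMap.toSpanSingleton ℤ K f) Kb.subtype with hPhidef
    have hPhiapp : ∀ p : ℤ × Kb, Phi p = p.1 • f + (p.2 : K) := fun p => rfl
    have hPhiinj : Function.Injective Phi := by
      rw [← LinearMap.ker_eq_bot, eq_bot_iff]
      rintro ⟨m, y⟩ hp
      have h0 : m • f + (y : K) = 0 := hp
      have h1 : B (m • f + (y : K)) f = 0 := by rw [h0]; simp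
      rw [map_add, map_smul] at h1
      simp only [LinearMap.add_apply, LinearMap.smul_apply, smul_eq_mul, hff, mul_one,
        (hmemKb _).mp y.2, add_zero] at h1
      subst h1
      rw [zero_smul, zero_add] at h0
      have : y = 0 := Subtype.ext h0
      simp [this]
    have hPhisurj : Function.Surjective Phi := by
      intro x
      refine ⟨(B x f, ⟨x - B x f • f, hproj x⟩), ?_⟩
      rw [hPhiapp]
      show B x f • f + (x - B x f • f) = x
      abel
    have hPhibij : Function.Bijective Phi := ⟨hPhiinj, hPhisurj⟩
    set zb : Kb := ⟨z, hz⟩ with hzbdef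
    set Bb := B.domRestrict₁₂ Kb Kb with hBbdef
    have hBbapp : ∀ x y : Kb, Bb x y = B x y := fun x y => rfl
    set At := blowupAut Bb sbar zb with hAtdef
    have hAtapp : ∀ p : ℤ × Kb, At p = (p.1 - B p.2 z, p.1 • zb + sbar p.2) := fun p => rfl
    have hint : ∀ p : ℤ × Kb, Phi (At p) = s (Phi p) := by
      intro p
      rw [hAtapp, hPhiapp, hPhiapp]
      simp only [Submodule.coe_add, Submodule.coe_smul, hzbdef, hsbarapp]
      rw [map_add, map_smul, sub_smul, hsf]
      module
    have hAtbij : Function.Bijective At := by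
      constructor
      · intro p q h
        apply hPhiinj
        exact hbij.1 (by rw [← hint, ← hint, h])
      · intro r
        obtain ⟨x, hx⟩ := hbij.2 (Phi r)
        obtain ⟨p, hp⟩ := hPhisurj x
        exact ⟨p, hPhiinj (by rw [hint, hp, hx])⟩
    have hsbarzb : sbar zb = zb := by
      apply Subtype.ext
      rw [hsbarapp]
      simp only [hzbdef]
      rw [hszz, hBzz, zero_smul, add_zero]
    have hsbarbij : Function.Bijective sbar := by
      constructor
      · rw [← LinearMap.ker_eq_bot, eq_bot_iff]
        intro u hu
        have h0 : (sbar u : K) = 0 := by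
          rw [LinearMap.mem_ker] at hu; rw [hu]; rfl
        rw [hsbarapp] at h0
        have hsu : s (u : K) = -(B u z • f) := by
          rw [eq_neg_iff_add_eq_zero]; exact h0
        have h1 : B (u : K) (s (u : K)) = B (u : K) (u : K) := hserre u u
        have h2 : B (u : K) (s (u : K)) = 0 := by
          rw [hsu, map_neg, map_smul, smul_eq_mul, (hmemKb _).mp u.2]
          simp
        have h3 : B (s u) (s (u : K)) = B (u : K) (s u) := hserre (s u) u
        have h4 : B (s u) (s (u : K)) = B (u:K) z * B (u:K) z := by
          rw [hsu]
          simp only [map_neg, map_smul, LinearMap.neg_apply, LinearMap.smul_apply,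
            smul_eq_mul, hff]
          ring
        have hcc : B (u:K) z * B (u:K) z = 0 := by rw [← h4, h3, h2]
        have hc : B (u : K) z = 0 := mul_self_eq_zero.mp hcc
        have h5 : s (u : K) = 0 := by rw [hsu, hc, zero_smul, neg_zero]
        have h6 : (u : K) = 0 := hbij.1 (by rw [h5, map_zero])
        simpa using Subtype.ext h6
      · intro w
        obtain ⟨p, hp⟩ := hAtbij.2 (0, w)
        have h2 : p.1 • zb + sbar p.2 = w := by
          have h3 := congrArg Prod.snd hp
          rw [hAtapp] at h3
          exact h3
        refine ⟨p.2 + p.1 • zb, ?_⟩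
        rw [map_add, map_smul, hsbarzb, ← h2]
        abel
    have hserrebar : ∀ x y : Kb, Bb x (sbar y) = Bb y x := by
      intro x y
      rw [hBbapp, hBbapp, hsbarapp]
      rw [map_add, map_smul]
      simp only [LinearMap.add_apply, LinearMap.smul_apply, smul_eq_mul,
        (hmemKb _).mp x.2, mul_zero, add_zero]
      exact hserre _ _
    have hfw : ∀ w : K, w ∈ Kb → B f w = B z w := by
      intro w hw
      obtain ⟨u, rfl⟩ := hbij.2 w
      have e1 : B f (s u) = B u f := hserre f u
      have e2 : B (s u) (s f) = B f (s u) := hserre (s u) f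
      have e3 : B z (s u) = B u z := hserre z u
      have e4 : B (s u) f = 0 := (hmemKb _).mp hw
      have e5 : B (s u) z = B u z := hAz u
      have e6 : B (s u) (s f) = B (s u) z + B (s u) f := by
        rw [hsf, map_add]
      rw [e1, e3]
      linarith
    have hform : ∀ p q : ℤ × Kb, B (Phi p) (Phi q) = blowupForm Bb zb p q := by
      intro p q
      have hrhs : blowupForm Bb zb p q = p.1 * q.1 + p.1 * B z q.2 + B p.2 q.2 := rfl
      rw [hrhs, hPhiapp, hPhiapp]
      rw [map_add, map_smul]
      simp only [LinearMap.add_apply, LinearMap.smul_apply, map_add, map_smul, smul_eq_mul,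
        hff, mul_one, (hmemKb _).mp p.2.2, mul_zero, add_zero, hfw _ q.2.2]
      ring
    -- rational infrastructure for the submodule
    set iQ := LinearMap.baseChange ℚ Kb.subtype with hiQdef
    have hiinj : Function.Injective iQ := iotaQ_injective Kb
    have hrangeiQ : LinearMap.range iQ = LinearMap.ker (BQ.flip fQ) := range_iotaQ B f hff
    have hkerpair : ∀ w : ℚ ⊗[ℤ] K, w ∈ LinearMap.range iQ → BQ w fQ = 0 := by
      intro w hw
      rw [hrangeiQ] at hw
      exact hw
    have hBQff : BQ fQ fQ = 1 := by
      have h1 : BQ fQ fQ = ((B f f : ℤ) : ℚ) := bq_tmul B f f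
      rw [hff] at h1
      exact h1.trans (by norm_num)
    have hsfQ : sQ fQ = fQ + zQ := by
      have h1 : sQ fQ = (1:ℚ) ⊗ₜ[ℤ] (s f) := rfl
      rw [h1, hsf, tmul_add, hfQdef, hzQdef]
      abel
    have hsubap : ∀ (u : ℚ ⊗[ℤ] K →ₗ[ℚ] ℚ ⊗[ℤ] K) (w : ℚ ⊗[ℤ] K),
        (u - 1) w = u w - w := by
      intro u w
      simp [LinearMap.sub_apply]
    have hF2range : F2 ≤ LinearMap.range iQ := by
      intro w hw
      rw [hrangeiQ]
      have hsw : sQ w = w := by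
        have h1 : (sQ - 1) w ∈ Submodule.map (sQ - 1) F2 := Submodule.mem_map_of_mem hw
        rw [hmap2, Submodule.mem_bot, hsubap] at h1
        exact sub_eq_zero.mp h1
      have h2 : BQ fQ (sQ w) = BQ w fQ := serreQ B s hserre fQ w
      rw [hsw] at h2
      have h3 : BQ fQ w = 0 := hpair fQ hf1 w hw
      show BQ w fQ = 0
      rw [← h2, h3]
    -- dimension bookkeeping
    set n := Module.finrank ℚ (ℚ ⊗[ℤ] ↥Kb) with hndef
    set N := Module.finrank ℚ (ℚ ⊗[ℤ] K) with hNdef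
    have hfQn0 : fQ ≠ 0 := by
      intro h
      rw [h] at hBQff
      simp at hBQff
    have hrangen : Module.finrank ℚ (LinearMap.range iQ) = n :=
      LinearMap.finrank_range_of_inj hiinj
    have hsupV : LinearMap.range iQ ⊔ Submodule.span ℚ {fQ} = ⊤ := by
      rw [eq_top_iff]
      intro v _
      have h1 : v - BQ v fQ • fQ ∈ LinearMap.range iQ := by
        rw [hrangeiQ]
        show BQ (v - BQ v fQ • fQ) fQ = 0
        rw [map_sub, map_smul]
        simp only [LinearMap.sub_apply, LinearMap.smul_apply, smul_eq_mul, hBQff, mul_one,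
          sub_self]
      exact Submodule.mem_sup.mpr ⟨_, h1, _,
        Submodule.smul_mem _ _ (Submodule.mem_span_singleton_self fQ), by abel⟩
    have hinfV : LinearMap.range iQ ⊓ Submodule.span ℚ {fQ} = ⊥ := by
      rw [eq_bot_iff]
      intro v hv
      obtain ⟨hv1, hv2⟩ := hv
      obtain ⟨c, rfl⟩ := Submodule.mem_span_singleton.mp hv2
      have h1 : BQ (c • fQ) fQ = 0 := by
        rw [hrangeiQ] at hv1
        exact hv1
      rw [map_smul] at h1
      simp only [LinearMap.smul_apply, smul_eq_mul, hBQff, mul_one] at h1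
      rw [h1, zero_smul]
      exact Submodule.zero_mem _
    have hNn : N = n + 1 := by
      have h1 := Submodule.finrank_sup_add_finrank_inf_eq (LinearMap.range iQ)
        (Submodule.span ℚ {fQ})
      rw [hsupV, hinfV, finrank_top, finrank_bot, hrangen,
        finrank_span_singleton hfQn0] at h1
      omega
    have hcomapfr : ∀ G : Submodule ℚ (ℚ ⊗[ℤ] K),
        Module.finrank ℚ (Submodule.comap iQ G)
          = Module.finrank ℚ ↥(LinearMap.range iQ ⊓ G) := by
      intro G
      rw [← Submodule.map_comap_eq]
      exact (Submodule.equivMapOfInjective iQ hiinj _).finrank_eq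
    have hd2b : Module.finrank ℚ (Submodule.comap iQ F2) = 1 := by
      rw [hcomapfr, inf_eq_right.mpr hF2range, hd2]
    have hsupF1 : LinearMap.range iQ ⊔ F1 = ⊤ := by
      rw [eq_top_iff, ← hsupV]
      exact sup_le_sup_left (Submodule.span_le.mpr (by simpa using hf1)) _
    have hn1 : 1 ≤ Module.finrank ℚ F1 := hd2 ▸ Submodule.finrank_mono h21
    have hd1b : Module.finrank ℚ (Submodule.comap iQ F1) = n - 1 := by
      have h1 := Submodule.finrank_sup_add_finrank_inf_eq (LinearMap.range iQ) F1
      rw [hsupF1, finrank_top, hrangen, hd1] at h1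
      rw [hcomapfr]
      omega
    have hn2 : 2 ≤ n := by
      have h1 : Module.finrank ℚ (Submodule.comap iQ F2)
          ≤ Module.finrank ℚ (Submodule.comap iQ F1) :=
        Submodule.finrank_mono (Submodule.comap_mono h21)
      rw [hd2b, hd1b] at h1
      omega
    -- the key commutation identity
    set sbQ := LinearMap.baseChange ℚ sbar with hsbQdef
    have hkey : ∀ v : ℚ ⊗[ℤ] ↥Kb,
        iQ (sbQ v - v) = (sQ - 1) (iQ v) + BQ (iQ v) zQ • fQ := by
      intro v
      have hcm : Kb.subtype ∘ₗ sbar = T ∘ₗ Kb.subtype := by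
        ext y
        rfl
      have hcomp : iQ (sbQ v) = LinearMap.baseChange ℚ T (iQ v) := by
        have h1 : iQ (sbQ v) = (LinearMap.baseChange ℚ (Kb.subtype ∘ₗ sbar)) v := by
          rw [LinearMap.baseChange_comp]
          rfl
        rw [h1, hcm, LinearMap.baseChange_comp]
        rfl
      rw [map_sub, hcomp, hTdef, baseChange_T_apply, hsubap]
      have : LinearMap.baseChange ℚ s (iQ v) = sQ (iQ v) := rfl
      rw [this]
      abel
    have hsubapb : ∀ (u : ℚ ⊗[ℤ] ↥Kb →ₗ[ℚ] ℚ ⊗[ℤ] ↥Kb) (w : ℚ ⊗[ℤ] ↥Kb),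
        (u - 1) w = u w - w := by
      intro u w
      simp [LinearMap.sub_apply]
    have hbrange : LinearMap.range (sbQ - 1) ≤ Submodule.comap iQ F1 := by
      rintro x ⟨v, rfl⟩
      show iQ ((sbQ - 1) v) ∈ F1
      rw [hsubapb, hkey]
      exact Submodule.add_mem _ (hrange (LinearMap.mem_range_self _ _))
        (Submodule.smul_mem _ _ hf1)
    have hbmap1 : Submodule.map (sbQ - 1) (Submodule.comap iQ F1)
        ≤ Submodule.comap iQ F2 := by
      rintro x ⟨v, hv, rfl⟩
      have hv' : iQ v ∈ F1 := hv
      have hzero : BQ (iQ v) zQ = 0 := hpair _ hv' zQ hzF2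
      show iQ ((sbQ - 1) v) ∈ F2
      rw [hsubapb, hkey, hzero, zero_smul, add_zero]
      exact hmap1 (Submodule.mem_map_of_mem hv')
    have hbmap2 : Submodule.map (sbQ - 1) (Submodule.comap iQ F2) = ⊥ := by
      rw [eq_bot_iff]
      rintro x ⟨v, hv, rfl⟩
      have hv' : iQ v ∈ F2 := hv
      have hzero : BQ (iQ v) zQ = 0 := hpair _ (h21 hv') zQ hzF2
      have h0 : (sQ - 1) (iQ v) = 0 := by
        have h1 : (sQ - 1) (iQ v) ∈ Submodule.map (sQ - 1) F2 := Submodule.mem_map_of_mem hv'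
        rw [hmap2, Submodule.mem_bot] at h1
        exact h1
      have h2 : iQ ((sbQ - 1) v) = 0 := by
        rw [hsubapb, hkey, hzero, zero_smul, add_zero, h0]
      have h3 : (sbQ - 1) v = 0 := hiinj (by rw [h2, map_zero])
      rw [Submodule.mem_bot, h3]
    have hchain : ∀ v : ℚ ⊗[ℤ] ↥Kb, (sbQ - 1) ((sbQ - 1) ((sbQ - 1) v)) = 0 := by
      intro v
      have h1 : (sbQ - 1) v ∈ Submodule.comap iQ F1 :=
        hbrange (LinearMap.mem_range_self _ _)
      have h2 : (sbQ - 1) ((sbQ - 1) v) ∈ Submodule.comap iQ F2 :=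
        hbmap1 (Submodule.mem_map_of_mem h1)
      have h3 : (sbQ - 1) ((sbQ - 1) ((sbQ - 1) v))
          ∈ Submodule.map (sbQ - 1) (Submodule.comap iQ F2) :=
        Submodule.mem_map_of_mem h2
      rw [hbmap2, Submodule.mem_bot] at h3
      exact h3
    have hunip : (sbQ - 1) ^ n = 0 := by
      rcases Nat.lt_or_ge n 3 with hn3 | hn3
      · have hn2' : n = 2 := by omega
        have heq : Submodule.comap iQ F2 = Submodule.comap iQ F1 := by
          apply Submodule.eq_of_le_of_finrank_eq (Submodule.comap_mono h21)
          rw [hd2b, hd1b, hn2']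
        rw [hn2']
        apply LinearMap.ext
        intro v
        rw [pow_succ, pow_one, Module.End.mul_apply]
        have h1 : (sbQ - 1) v ∈ Submodule.comap iQ F2 := by
          rw [heq]
          exact hbrange (LinearMap.mem_range_self _ _)
        have h2 : (sbQ - 1) ((sbQ - 1) v) ∈ Submodule.map (sbQ - 1) (Submodule.comap iQ F2) :=
          Submodule.mem_map_of_mem h1
        rw [hbmap2, Submodule.mem_bot] at h2
        rw [h2]
        rfl
      · apply pow_eq_zero_of_le hn3
        apply LinearMap.ext
        intro v
        rw [pow_succ, pow_succ, pow_one, Module.End.mul_apply, Module.End.mul_apply]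
        rw [hchain]
        rfl
    have hrank : Module.finrank ℚ (LinearMap.range (sbQ - 1)) ≤ 2 := by
      set PQ : ℚ ⊗[ℤ] K →ₗ[ℚ] ℚ ⊗[ℤ] K :=
        LinearMap.id - LinearMap.toSpanSingleton ℚ (ℚ ⊗[ℤ] K) fQ ∘ₗ BQ.flip fQ with hPQdef
      have hPQapp : ∀ w, PQ w = w - BQ w fQ • fQ := fun w => rfl
      have hkey2 : ∀ v : ℚ ⊗[ℤ] ↥Kb, iQ ((sbQ - 1) v) = PQ ((sQ - 1) (iQ v)) := by
        intro v
        rw [hsubapb, hkey, hPQapp]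
        have hw : BQ (iQ v) fQ = 0 := hkerpair _ (LinearMap.mem_range_self _ _)
        have h1 : BQ (sQ (iQ v)) (sQ fQ) = BQ fQ (sQ (iQ v)) := serreQ B s hserre (sQ (iQ v)) fQ
        have h2 : BQ fQ (sQ (iQ v)) = BQ (iQ v) fQ := serreQ B s hserre fQ (iQ v)
        have h3 : BQ ((sQ - 1) (iQ v)) zQ = 0 :=
          hpair _ (hrange (LinearMap.mem_range_self _ _)) zQ hzF2
        rw [hsubap] at h3
        rw [map_sub, LinearMap.sub_apply] at h3
        rw [hsfQ, map_add, h2, hw] at h1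
        have hs : BQ ((sQ - 1) (iQ v)) fQ = - BQ (iQ v) zQ := by
          rw [hsubap, map_sub, LinearMap.sub_apply, hw]
          linarith
        rw [hs, neg_smul, sub_neg_eq_add]
      have hmaple : Submodule.map iQ (LinearMap.range (sbQ - 1))
          ≤ Submodule.map PQ (LinearMap.range (sQ - 1)) := by
        rintro x ⟨y, ⟨v, rfl⟩, rfl⟩
        exact ⟨(sQ - 1) (iQ v), LinearMap.mem_range_self _ _, (hkey2 v).symm⟩
      calc Module.finrank ℚ (LinearMap.range (sbQ - 1))
          = Module.finrank ℚ (Submodule.map iQ (LinearMap.range (sbQ - 1))) :=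
            (Submodule.equivMapOfInjective iQ hiinj _).finrank_eq
        _ ≤ Module.finrank ℚ (Submodule.map PQ (LinearMap.range (sQ - 1))) :=
            Submodule.finrank_mono hmaple
        _ ≤ Module.finrank ℚ (LinearMap.range (sQ - 1)) := Submodule.finrank_map_le _ _
        _ ≤ 2 := hsurf.2
    exact ⟨sbar, hsbarapp, hsbarbij, hserrebar, ⟨hunip, hrank⟩,
      ⟨Submodule.comap_mono h21, hbrange, hbmap1, hbmap2, hd1b, hd2b,
        fun v hv w hw => by
          rw [domRestrict_baseChange]
          exact hpair _ hv _ hw⟩,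
      hPhibij, hform, hint⟩
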